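/- Let Ω be a region (nonempty open connected subset) of ℂ and let F : Ω → M_n(ℂ) be a nonconstant analytic function. If every function z ↦ s_k(F(z)), 1 ≤ k ≤ n, attains its minimum value over Ω at a common point z₀ ∈ Ω, then det(F(z₀)) = 0. -/

import Mathlib

open scoped Matrix

/-- The Euclidean norm of a vector in `ℂⁿ`. -/
noncomputable def euclNorm {n : ℕ} (x : Fin n → ℂ) : ℝ :=
  Real.sqrt (∑ i, ‖x i‖ ^ 2)

/-- The operator norm of a complex `n × n` matrix induced by the Euclidean norm on `ℂⁿ`. -/
noncomputable def opNorm {n : ℕ} (A : Matrix (Fin n) (Fin n) ℂ) : ℝ :=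
  ‖(Matrix.toEuclideanCLM (𝕜 := ℂ) A : EuclideanSpace ℂ (Fin n) →L[ℂ] EuclideanSpace ℂ (Fin n))‖

/-- `sval A k` is the `(k+1)`-st singular value `s_{k+1}(A)` of `A`: the nonnegative square
roots of the eigenvalues of `Aᴴ * A`, listed in nonincreasing order.  In particular
`sval A 0 = s₁(A)` is the largest singular value (the operator norm) and
`sval A (n-1) = sₙ(A)` is the smallest. -/
noncomputable def sval {n : ℕ} (A : Matrix (Fin n) (Fin n) ℂ) (k : Fin n) : ℝ :=
  let f : Fin n → ℝ := fun i =>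
    Real.sqrt ((Matrix.isHermitian_conjTranspose_mul_self A).eigenvalues i)
  (f ∘ Tuple.sort f) k.rev

/-- The Frobenius (Hilbert--Schmidt) norm of a complex matrix: `‖T‖_F = (trace (Tᴴ T))^{1/2}`. -/
noncomputable def frobNorm {n : ℕ} (A : Matrix (Fin n) (Fin n) ℂ) : ℝ :=
  Real.sqrt ((Matrix.trace (Aᴴ * A)).re)

attribute [local instance] Matrix.normedAddCommGroup Matrix.normedSpace

private lemma sval_sum_eq {n : ℕ} (A : Matrix (Fin n) (Fin n) ℂ) (g : ℝ → ℝ) :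
    ∑ k, g (sval A k) =
      ∑ i, g (Real.sqrt ((Matrix.isHermitian_conjTranspose_mul_self A).eigenvalues i)) := by
  set f : Fin n → ℝ := fun i =>
    Real.sqrt ((Matrix.isHermitian_conjTranspose_mul_self A).eigenvalues i) with hf
  have h : ∀ k : Fin n, sval A k = f ((Fin.revPerm.trans (Tuple.sort f)) k) := fun k => rfl
  simp_rw [h]
  exact Equiv.sum_comp (Fin.revPerm.trans (Tuple.sort f)) (g ∘ f)

open scoped ComplexOrder in
private lemma eigenvalues_pos {n : ℕ} {A : Matrix (Fin n) (Fin n) ℂ} (h : A.det ≠ 0)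
    (i : Fin n) : 0 < (Matrix.isHermitian_conjTranspose_mul_self A).eigenvalues i := by
  have hnn : 0 ≤ (Matrix.isHermitian_conjTranspose_mul_self A).eigenvalues i :=
    (Matrix.posSemidef_conjTranspose_mul_self A).eigenvalues_nonneg i
  rcases hnn.lt_or_eq with h' | h'
  · exact h'
  · exfalso
    have hdet : (Aᴴ * A).det = 0 := by
      rw [(Matrix.isHermitian_conjTranspose_mul_self A).det_eq_prod_eigenvalues]
      exact Finset.prod_eq_zero (Finset.mem_univ i) (by rw [← h']; simp)
    rw [Matrix.det_mul, Matrix.det_conjTranspose, mul_eq_zero] at hdet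
    rcases hdet with h0 | h0
    · exact h (by simpa using h0)
    · exact h h0

private lemma sval_pos {n : ℕ} {A : Matrix (Fin n) (Fin n) ℂ} (h : A.det ≠ 0) (k : Fin n) :
    0 < sval A k := by
  have e : sval A k = Real.sqrt ((Matrix.isHermitian_conjTranspose_mul_self A).eigenvalues
      ((Tuple.sort fun i =>
        Real.sqrt ((Matrix.isHermitian_conjTranspose_mul_self A).eigenvalues i)) k.rev)) := rfl
  rw [e]
  exact Real.sqrt_pos.mpr (eigenvalues_pos h _)

private lemma det_ne_zero_of_sval_pos {n : ℕ} {A : Matrix (Fin n) (Fin n) ℂ}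
    (h : ∀ k, 0 < sval A k) : A.det ≠ 0 := by
  set f : Fin n → ℝ := fun i =>
    Real.sqrt ((Matrix.isHermitian_conjTranspose_mul_self A).eigenvalues i) with hf
  have hl : ∀ i, 0 < (Matrix.isHermitian_conjTranspose_mul_self A).eigenvalues i := by
    intro i
    have hk := h (((Tuple.sort f).symm i).rev)
    have e : sval A (((Tuple.sort f).symm i).rev)
        = Real.sqrt ((Matrix.isHermitian_conjTranspose_mul_self A).eigenvalues i) := by
      show Real.sqrt ((Matrix.isHermitian_conjTranspose_mul_self A).eigenvalues
        (Tuple.sort f ((((Tuple.sort f).symm i).rev).rev))) = _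
      rw [Fin.rev_rev, Equiv.apply_symm_apply]
    rw [e] at hk
    exact Real.sqrt_pos.mp hk
  have hprod : (Aᴴ * A).det ≠ 0 := by
    rw [(Matrix.isHermitian_conjTranspose_mul_self A).det_eq_prod_eigenvalues]
    exact Finset.prod_ne_zero_iff.mpr fun i _ => Complex.ofReal_ne_zero.mpr (hl i).ne'
  intro h0
  rw [Matrix.det_mul, h0, mul_zero] at hprod
  exact hprod rfl

private lemma trace_inv_herm {n : ℕ} (B : Matrix (Fin n) (Fin n) ℂ) (hB : B.IsHermitian)
    (hpos : ∀ i, hB.eigenvalues i ≠ 0) :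
    Matrix.trace B⁻¹ = ∑ i, ((hB.eigenvalues i : ℂ))⁻¹ := by
  set U : Matrix (Fin n) (Fin n) ℂ := (hB.eigenvectorUnitary : Matrix (Fin n) (Fin n) ℂ) with hU
  have hU1 : U * star U = 1 := Matrix.mem_unitaryGroup_iff.mp hB.eigenvectorUnitary.2
  have hU2 : star U * U = 1 := Matrix.mem_unitaryGroup_iff'.mp hB.eigenvectorUnitary.2
  have hU2' : ∀ M : Matrix (Fin n) (Fin n) ℂ, star U * (U * M) = M := by
    intro M; rw [← Matrix.mul_assoc, hU2, Matrix.one_mul]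
  set d : Fin n → ℂ := fun i => (hB.eigenvalues i : ℂ) with hd
  have hDD : Matrix.diagonal (fun i => (d i)⁻¹) * Matrix.diagonal d = 1 := by
    rw [Matrix.diagonal_mul_diagonal]
    have : (fun i => (d i)⁻¹ * d i) = fun _ => (1 : ℂ) :=
      funext fun i => inv_mul_cancel₀ (by simp [hd, hpos i])
    rw [this, Matrix.diagonal_one]
  have hspec := hB.spectral_theorem
  have hinv : B⁻¹ = U * Matrix.diagonal (fun i => (d i)⁻¹) * star U := by
    apply Matrix.inv_eq_left_inv
    conv_lhs => rw [hspec]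
    calc U * Matrix.diagonal (fun i => (d i)⁻¹) * star U *
          (U * Matrix.diagonal (RCLike.ofReal ∘ hB.eigenvalues) * star U)
        = U * ((Matrix.diagonal (fun i => (d i)⁻¹) * Matrix.diagonal d) * star U) := by
          simp only [Matrix.mul_assoc, hU2']
          rfl
      _ = 1 := by rw [hDD, Matrix.one_mul]; exact hU1
  rw [hinv, Matrix.trace_mul_cycle, hU2, Matrix.one_mul, Matrix.trace_diagonal]

private lemma trace_conj_re {n : ℕ} (B : Matrix (Fin n) (Fin n) ℂ) :
    (Matrix.trace (Bᴴ * B)).re = ∑ p : Fin n × Fin n, ‖B p.1 p.2‖ ^ 2 := by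
  have key : ∀ z : ℂ, (star z * z).re = ‖z‖ ^ 2 := by
    intro z
    rw [Complex.star_def, mul_comm, Complex.mul_conj, Complex.ofReal_re, ← Complex.sq_norm]
  rw [Fintype.sum_prod_type]
  simp only [Matrix.trace, Matrix.diag_apply, Matrix.mul_apply, Matrix.conjTranspose_apply,
    Complex.re_sum]
  rw [Finset.sum_comm]
  exact Finset.sum_congr rfl fun i _ => Finset.sum_congr rfl fun j _ => key _

private lemma sum_inv_sq {n : ℕ} {A : Matrix (Fin n) (Fin n) ℂ} (h : A.det ≠ 0) :
    ∑ p : Fin n × Fin n, ‖A⁻¹ p.1 p.2‖ ^ 2 = ∑ k, ((sval A k) ^ 2)⁻¹ := by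
  have htr : Matrix.trace ((A⁻¹)ᴴ * A⁻¹)
      = ∑ i, (((Matrix.isHermitian_conjTranspose_mul_self A).eigenvalues i : ℂ))⁻¹ := by
    rw [Matrix.conjTranspose_nonsing_inv, Matrix.trace_mul_comm, ← Matrix.mul_inv_rev]
    exact trace_inv_herm _ (Matrix.isHermitian_conjTranspose_mul_self A)
      fun i => (eigenvalues_pos h i).ne'
  have lhs : ∑ p : Fin n × Fin n, ‖A⁻¹ p.1 p.2‖ ^ 2
      = ∑ i, ((Matrix.isHermitian_conjTranspose_mul_self A).eigenvalues i)⁻¹ := by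
    rw [← trace_conj_re, htr, Complex.re_sum]
    exact Finset.sum_congr rfl fun i _ => by rw [← Complex.ofReal_inv, Complex.ofReal_re]
  have rhs : ∑ k, ((sval A k) ^ 2)⁻¹
      = ∑ i, ((Matrix.isHermitian_conjTranspose_mul_self A).eigenvalues i)⁻¹ := by
    rw [sval_sum_eq A (fun t => (t ^ 2)⁻¹)]
    exact Finset.sum_congr rfl fun i _ => by rw [Real.sq_sqrt (eigenvalues_pos h i).le]
  rw [lhs, rhs]

private lemma diff_entry {n : ℕ} {F : ℂ → Matrix (Fin n) (Fin n) ℂ} {z : ℂ}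
    (h : DifferentiableAt ℂ F z) (i j : Fin n) :
    DifferentiableAt ℂ (fun z => F z i j) z :=
  differentiableAt_pi.mp (differentiableAt_pi.mp h i) j

private lemma diff_det {n : ℕ} {M : ℂ → Matrix (Fin n) (Fin n) ℂ} {z : ℂ}
    (h : ∀ i j, DifferentiableAt ℂ (fun z => M z i j) z) :
    DifferentiableAt ℂ (fun z => (M z).det) z := by
  simp only [Matrix.det_apply']
  apply DifferentiableAt.fun_sum
  intro σ _
  exact (DifferentiableAt.fun_finsetProd (fun i _ => h (σ i) i)).const_mul _

private lemma diff_adj_entry {n : ℕ} {M : ℂ → Matrix (Fin n) (Fin n) ℂ} {z : ℂ}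
    (h : ∀ i j, DifferentiableAt ℂ (fun z => M z i j) z) (i j : Fin n) :
    DifferentiableAt ℂ (fun z => (M z).adjugate i j) z := by
  simp only [Matrix.adjugate_apply]
  apply diff_det
  intro i' j'
  simp only [Matrix.updateRow_apply]
  by_cases hc : i' = j
  · simp only [hc, if_pos rfl]
    exact differentiableAt_const _
  · simp only [hc, if_false]
    exact h i' j'

private lemma diff_inv_mat {n : ℕ} {F : ℂ → Matrix (Fin n) (Fin n) ℂ} {z : ℂ}
    (h : DifferentiableAt ℂ F z) (hd : (F z).det ≠ 0) :
    DifferentiableAt ℂ (fun z => (F z)⁻¹) z := by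
  have hent : ∀ i j, DifferentiableAt ℂ (fun z => F z i j) z := diff_entry h
  have hdet : DifferentiableAt ℂ (fun z => (F z).det) z := diff_det hent
  have hadj : DifferentiableAt ℂ (fun z => (F z).adjugate) z := by
    apply differentiableAt_pi.mpr
    intro i
    apply differentiableAt_pi.mpr
    intro j
    exact diff_adj_entry hent i j
  have e : (fun z => (F z)⁻¹) = fun z => ((F z).det)⁻¹ • (F z).adjugate := by
    funext w
    rw [Matrix.inv_def, Ring.inverse_eq_inv']
  rw [e]
  exact (hdet.inv hd).smul hadj

private noncomputable def emb (n : ℕ) :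
    Matrix (Fin n) (Fin n) ℂ →ₗ[ℂ] EuclideanSpace ℂ (Fin n × Fin n) where
  toFun A := (WithLp.equiv 2 _).symm (fun p => A p.1 p.2)
  map_add' A B := by
    apply PiLp.ext
    intro p
    simp [WithLp.equiv_symm_apply, PiLp.toLp_apply]
  map_smul' c A := by
    apply PiLp.ext
    intro p
    simp [WithLp.equiv_symm_apply, PiLp.toLp_apply]

private lemma emb_apply {n : ℕ} (A : Matrix (Fin n) (Fin n) ℂ) (p : Fin n × Fin n) :
    emb n A p = A p.1 p.2 := rfl

private lemma norm_emb {n : ℕ} (A : Matrix (Fin n) (Fin n) ℂ) :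
    ‖emb n A‖ = Real.sqrt (∑ p : Fin n × Fin n, ‖A p.1 p.2‖ ^ 2) := by
  rw [EuclideanSpace.norm_eq]
  congr 1

private lemma emb_inj {n : ℕ} {A B : Matrix (Fin n) (Fin n) ℂ} (h : emb n A = emb n B) :
    A = B := by
  funext i j
  have := congrArg (fun x : EuclideanSpace ℂ (Fin n × Fin n) => x (i, j)) h
  simpa [emb_apply] using this

/-- If `F` is a nonconstant analytic function on a region `Ω` and every singular value function
`z ↦ s_k(F z)` attains its minimum over `Ω` at a common point `z₀ ∈ Ω`, then
`det (F z₀) = 0`. -/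
theorem det_eq_zero_of_min_singular_values {n : ℕ} (Ω : Set ℂ) (hΩ : IsOpen Ω)
    (hconn : IsConnected Ω) (F : ℂ → Matrix (Fin n) (Fin n) ℂ)
    (hF : ∀ z ∈ Ω, DifferentiableAt ℂ F z)
    (hnc : ¬ ∀ z ∈ Ω, ∀ w ∈ Ω, F z = F w)
    (z₀ : ℂ) (hz₀ : z₀ ∈ Ω)
    (hmin : ∀ k : Fin n, ∀ z ∈ Ω, sval (F z₀) k ≤ sval (F z) k) :
    (F z₀).det = 0 := by
  by_contra hdet
  have hd0 : ∀ z ∈ Ω, (F z).det ≠ 0 := fun z hz =>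
    det_ne_zero_of_sval_pos fun k => lt_of_lt_of_le (sval_pos hdet k) (hmin k z hz)
  set f : ℂ → EuclideanSpace ℂ (Fin n × Fin n) := fun z => emb n ((F z)⁻¹) with hf
  have hdiff : DifferentiableOn ℂ f Ω := fun z hz =>
    (((emb n).toContinuousLinearMap).differentiableAt.comp z
      (diff_inv_mat (hF z hz) (hd0 z hz))).differentiableWithinAt
  have hmax : IsMaxOn (norm ∘ f) Ω z₀ := by
    intro z hz
    show ‖f z‖ ≤ ‖f z₀‖
    simp only [hf]
    rw [norm_emb, norm_emb]
    apply Real.sqrt_le_sqrt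
    rw [sum_inv_sq (hd0 z hz), sum_inv_sq (hd0 z₀ hz₀)]
    apply Finset.sum_le_sum
    intro k _
    have h1 : 0 < sval (F z₀) k := sval_pos hdet k
    have h2 := hmin k z hz
    have h3 : 0 < sval (F z₀) k ^ 2 := by positivity
    have h4 : sval (F z₀) k ^ 2 ≤ sval (F z) k ^ 2 := by
      apply pow_le_pow_left₀ h1.le h2
    exact inv_anti₀ h3 h4
  have heq := Complex.eqOn_of_isPreconnected_of_isMaxOn_norm hconn.isPreconnected hΩ hdiff
    hz₀ hmax
  have hFeq : ∀ z ∈ Ω, F z = F z₀ := by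
    intro z hz
    have h1 : (F z)⁻¹ = (F z₀)⁻¹ := emb_inj (heq hz)
    calc F z = ((F z)⁻¹)⁻¹ :=
          (Matrix.nonsing_inv_nonsing_inv _ (Ne.isUnit (hd0 z hz))).symm
      _ = ((F z₀)⁻¹)⁻¹ := by rw [h1]
      _ = F z₀ := Matrix.nonsing_inv_nonsing_inv _ (Ne.isUnit (hd0 z₀ hz₀))
  exact hnc fun z hz w hw => (hFeq z hz).trans (hFeq w hw).symm
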